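/- Let v_L > 0, y_L < 0, y_L² > 4v_L, R_L = √(y_L²−4v_L), and let v > v_L with y = v(y_L − R_L)/(2v_L) + (y_L + R_L)/2 (a point on the 1-shock curve S₁ through (v_L, y_L)) satisfying y² > 4v. Then the 1-shock speed s₁ = (−y_L − R_L)/(2v·v_L) satisfies the Lax admissibility inequalities λ₁(v_L, y_L) > s₁ > λ₁(v, y), where λ₁(v,y) = (−y − √(y²−4v))/(2v²). -/

import Mathlib

/-- First characteristic speed. -/
noncomputable def lam1 (v y : ℝ) : ℝ := (-y - Real.sqrt (y ^ 2 - 4 * v)) / (2 * v ^ 2)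

theorem stmt8 (vL yL v y RL : ℝ)
    (hvL : 0 < vL) (hyL : yL < 0) (hL : yL ^ 2 > 4 * vL)
    (hRL : RL = Real.sqrt (yL ^ 2 - 4 * vL))
    (hv : vL < v)
    (hy : y = v * (yL - RL) / (2 * vL) + (yL + RL) / 2)
    (hhyp : y ^ 2 > 4 * v) :
    lam1 vL yL > (-yL - RL) / (2 * v * vL) ∧
    (-yL - RL) / (2 * v * vL) > lam1 v y := by
  have hvL' : (vL : ℝ) ≠ 0 := hvL.ne'
  have hv0 : 0 < v := lt_trans hvL hv
  have hRLpos : 0 < RL := hRL ▸ Real.sqrt_pos.2 (by linarith)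
  have hRL2 : RL ^ 2 = yL ^ 2 - 4 * vL := by
    rw [hRL, Real.sq_sqrt (by linarith)]
  have hRLlt : RL < -yL := by nlinarith
  have hnum : 0 < -yL - RL := by linarith
  set R : ℝ := (yL + RL) / 2 + v * (RL - yL) / (2 * vL) with hRdef
  have hRpos : 0 < R := by
    have h2 : 2 * vL * R = vL * (yL + RL) + v * (RL - yL) := by
      rw [hRdef]; field_simp
    nlinarith
  have hid : y ^ 2 - 4 * v = R ^ 2 := by
    rw [hy, hRdef]
    field_simp
    linear_combination (-4 * vL * v) * hRL2
  have hsqrt : Real.sqrt (y ^ 2 - 4 * v) = R := by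
    rw [hid, Real.sqrt_sq hRpos.le]
  have hnumeq : -y - R = -yL - RL := by
    rw [hy, hRdef]; field_simp; ring
  have hlamL : lam1 vL yL = (-yL - RL) / (2 * vL ^ 2) := by
    rw [lam1, hRL]
  have hlamv : lam1 v y = (-yL - RL) / (2 * v ^ 2) := by
    rw [lam1, hsqrt, hnumeq]
  constructor
  · rw [hlamL, gt_iff_lt, div_lt_div_iff₀ (by positivity) (by positivity)]
    nlinarith [mul_pos (mul_pos hnum (sub_pos.2 hv)) hvL]
  · rw [hlamv, gt_iff_lt, div_lt_div_iff₀ (by positivity) (by positivity)]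
    nlinarith [mul_pos (mul_pos hnum (sub_pos.2 hv)) hv0]
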